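/- Let a ∈ ℝ^K with a_k ≥ 0 and ∑_k a_k = 1, and let 0 < λ < 1/K. For δ > 0, let z^δ be a minimizer of -∑_k a_k log(z_k) + λ ∑_k log(δ + z_k) over the simplex {z : z ≥ 0, ∑_k z_k = 1}. Then as δ → 0, z^δ converges to z^0 where z^0_k = (a_k - λ)_+ / ∑_j (a_j - λ)_+. -/

import Mathlib

open BigOperators Filter

section Aux
open Real

lemma log_concave_pt (x y t s : ℝ) (hx : 0 < x) (hy : 0 < y) (ht : 0 ≤ t) (hs : 0 ≤ s)
    (hts : t + s = 1) : t * Real.log x + s * Real.log y ≤ Real.log (t*x + s*y) := by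
  have := (strictConcaveOn_log_Ioi.concaveOn).2 (Set.mem_Ioi.2 hx) (Set.mem_Ioi.2 hy) ht hs hts
  simpa [smul_eq_mul] using this

-- L1
lemma lower_small (a lam δ z : ℝ) (ha : 0 < a) (halam : a < lam) (hδ : 0 < δ) (hz : 0 < z) :
    (lam - a) * Real.log δ +
      (lam * Real.log lam - a * Real.log a - (lam - a) * Real.log (lam - a)) ≤
    -(a * Real.log z) + lam * Real.log (δ + z) := by
  have hla : 0 < lam - a := by linarith
  have hlam : 0 < lam := by linarith
  have h1 : 0 < lam * δ / (lam - a) := by positivity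
  have h2 : 0 < lam * z / a := by positivity
  have key := log_concave_pt (lam * δ / (lam - a)) (lam * z / a) ((lam - a)/lam) (a/lam)
    h1 h2 (by positivity) (by positivity) (by field_simp; ring)
  have e1 : (lam - a)/lam * (lam * δ / (lam - a)) + a/lam * (lam * z / a) = δ + z := by
    field_simp
  rw [e1] at key
  have l1 : Real.log (lam * δ / (lam - a)) = Real.log lam + Real.log δ - Real.log (lam - a) := by
    rw [Real.log_div (by positivity) (ne_of_gt hla), Real.log_mul (ne_of_gt hlam) (ne_of_gt hδ)]
  have l2 : Real.log (lam * z / a) = Real.log lam + Real.log z - Real.log a := by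
    rw [Real.log_div (by positivity) (ne_of_gt ha), Real.log_mul (ne_of_gt hlam) (ne_of_gt hz)]
  rw [l1, l2] at key
  have key2 := mul_le_mul_of_nonneg_left key (le_of_lt hlam)
  have e2 : lam * ((lam - a)/lam * (Real.log lam + Real.log δ - Real.log (lam - a)) +
      a/lam * (Real.log lam + Real.log z - Real.log a)) =
      (lam - a) * (Real.log lam + Real.log δ - Real.log (lam - a)) +
      a * (Real.log lam + Real.log z - Real.log a) := by
    field_simp
  rw [e2] at key2
  nlinarith [key2]

-- L2
lemma kl_quad (p x : ℝ) (hp : 0 < p) (hp1 : p ≤ 1) (hx : 0 < x) (hx1 : x ≤ 1) :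
    p - x + (x - p)^2/2 ≤ p * (Real.log p - Real.log x) := by
  set f : ℝ → ℝ := fun y => p * (Real.log p - Real.log y) - (p - y) - (y - p)^2/2 with hf
  have hderiv : ∀ y : ℝ, 0 < y → HasDerivAt f (-(p/y) + 1 - (y - p)) y := by
    intro y hy
    have h1 : HasDerivAt Real.log y⁻¹ y := Real.hasDerivAt_log (ne_of_gt hy)
    have : HasDerivAt f (p * (0 - y⁻¹) - (0 - 1) - (2*(y-p)^1 * (1-0))/2) y := by
      exact (((hasDerivAt_const y (Real.log p)).sub h1).const_mul p |>.sub
        ((hasDerivAt_const y p).sub (hasDerivAt_id y))).sub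
        ((((hasDerivAt_id y).sub (hasDerivAt_const y p)).pow 2).div_const 2)
    convert this using 1
    field_simp
    ring
  have hfx : 0 ≤ f x := by
    rcases le_total x p with hle | hle
    · have hmono : AntitoneOn f (Set.Icc x p) := by
        apply antitoneOn_of_deriv_nonpos (convex_Icc x p)
        · exact fun y hy => (hderiv y (lt_of_lt_of_le hx hy.1)).differentiableAt.continuousAt.continuousWithinAt
        · intro y hy
          rw [interior_Icc] at hy
          exact ((hderiv y (lt_trans hx hy.1)).differentiableAt).differentiableWithinAt
        · intro y hy
          rw [interior_Icc] at hy
          have hy0 : 0 < y := lt_trans hx hy.1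
          rw [HasDerivAt.deriv (hderiv y hy0)]
          have h1 : 1 ≤ p / y := (one_le_div hy0).2 (le_of_lt hy.2)
          have h2 : p / y * y = p := div_mul_cancel₀ p (ne_of_gt hy0)
          have h3 : y ≤ 1 := le_trans (le_of_lt hy.2) hp1
          nlinarith [mul_nonneg (sub_nonneg.2 h1) (sub_nonneg.2 h3)]
      have := hmono (Set.mem_Icc.2 ⟨le_refl x, hle⟩) (Set.mem_Icc.2 ⟨hle, le_refl p⟩) hle
      have hfp : f p = 0 := by simp [hf]
      linarith
    · have hmono : MonotoneOn f (Set.Icc p x) := by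
        apply monotoneOn_of_deriv_nonneg (convex_Icc p x)
        · exact fun y hy => (hderiv y (lt_of_lt_of_le hp hy.1)).differentiableAt.continuousAt.continuousWithinAt
        · intro y hy
          rw [interior_Icc] at hy
          exact ((hderiv y (lt_trans hp hy.1)).differentiableAt).differentiableWithinAt
        · intro y hy
          rw [interior_Icc] at hy
          have hy0 : 0 < y := lt_trans hp hy.1
          rw [HasDerivAt.deriv (hderiv y hy0)]
          have hy1 : y < 1 := lt_of_lt_of_le hy.2 hx1
          have h1 : p/y ≤ 1 := (div_le_one hy0).2 (le_of_lt hy.1)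
          have h2 : p / y * y = p := div_mul_cancel₀ p (ne_of_gt hy0)
          have h3 : y ≤ 1 := le_of_lt hy1
          nlinarith [mul_nonneg (sub_nonneg.2 h1) (sub_nonneg.2 h3)]
      have := hmono (Set.mem_Icc.2 ⟨le_refl p, hle⟩) (Set.mem_Icc.2 ⟨hle, le_refl x⟩) hle
      have hfp : f p = 0 := by simp [hf]
      linarith
  simp only [hf] at hfx
  linarith

end Aux
set_option maxHeartbeats 2000000 in
lemma est (K : ℕ) (hK : 0 < K) (a : Fin K → ℝ) (ha : ∀ k, 0 ≤ a k)
    (hsum : ∑ k, a k = 1) (lam : ℝ) (hlam : 0 < lam) (hlamK : lam < 1 / K)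
    (δ : ℝ) (hδ : 0 < δ)
    (hVlt : ∑ k ∈ Finset.univ.filter (fun k => ¬ lam < a k),
        (if a k = lam then Real.sqrt δ else δ * (a k / (lam - a k))) < 1)
    (m : Fin K → ℝ)
    (hmem : (∀ k, 0 ≤ m k) ∧ (∑ k, m k = 1) ∧ ∀ k, a k ≠ 0 → 0 < m k)
    (hmin : IsMinOn
        (fun y : Fin K → ℝ =>
          -(∑ k, a k * Real.log (y k)) + lam * ∑ k, Real.log (δ + y k))
        {y : Fin K → ℝ | (∀ k, 0 ≤ y k) ∧ (∑ k, y k = 1) ∧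
          ∀ k, a k ≠ 0 → 0 < y k} m) :
    ∀ k, |m k - max (a k - lam) 0 / ∑ j, max (a j - lam) 0| ≤
      Real.sqrt (2 * ((-Real.log (1 - ∑ k ∈ Finset.univ.filter (fun k => ¬ lam < a k),
            (if a k = lam then Real.sqrt δ else δ * (a k / (lam - a k)))) +
          lam * δ * (∑ k ∈ Finset.univ.filter (fun k => lam < a k),
            (∑ j, max (a j - lam) 0) / (a k - lam)) + lam * Real.sqrt δ * K) /
          ∑ j, max (a j - lam) 0)) +
      (-Real.log (1 - ∑ k ∈ Finset.univ.filter (fun k => ¬ lam < a k),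
            (if a k = lam then Real.sqrt δ else δ * (a k / (lam - a k)))) +
          lam * δ * (∑ k ∈ Finset.univ.filter (fun k => lam < a k),
            (∑ j, max (a j - lam) 0) / (a k - lam)) + lam * Real.sqrt δ * K) /
          ∑ j, max (a j - lam) 0 := by
  classical
  obtain ⟨hm0, hm1, hmpos⟩ := hmem
  have hKR : (0:ℝ) < K := Nat.cast_pos.2 hK
  set P : Finset (Fin K) := Finset.univ.filter (fun k => lam < a k) with hP
  set Pc : Finset (Fin K) := Finset.univ.filter (fun k => ¬ lam < a k) with hPc
  set S : ℝ := ∑ j, max (a j - lam) 0 with hSdef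
  set V : ℝ := ∑ k ∈ Pc, (if a k = lam then Real.sqrt δ else δ * (a k / (lam - a k))) with hVdef
  set T : ℝ := ∑ k ∈ P, S / (a k - lam) with hT
  set E : ℝ := -Real.log (1 - V) + lam * δ * T + lam * Real.sqrt δ * K with hE
  set p : Fin K → ℝ := fun k => max (a k - lam) 0 / S with hp
  set w : Fin K → ℝ := fun k =>
    if lam < a k then (1 - V) * p k
    else (if a k = lam then Real.sqrt δ else δ * (a k / (lam - a k))) with hw
  -- membership facts
  have hmemP : ∀ k, lam < a k → k ∈ P := by
    intro k hk; rw [hP, Finset.mem_filter]; exact ⟨Finset.mem_univ k, hk⟩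
  have hmemPc : ∀ k, ¬ lam < a k → k ∈ Pc := by
    intro k hk; rw [hPc, Finset.mem_filter]; exact ⟨Finset.mem_univ k, hk⟩
  have hPlt : ∀ k ∈ P, lam < a k := by
    intro k hk; rw [hP, Finset.mem_filter] at hk; exact hk.2
  have hPcle : ∀ k ∈ Pc, a k ≤ lam := by
    intro k hk; rw [hPc, Finset.mem_filter] at hk; exact le_of_not_gt hk.2
  have hcnn : ∀ k, (0:ℝ) ≤ max (a k - lam) 0 := fun k => le_max_right _ _
  have hex : ∃ k, lam < a k := by
    by_contra h
    push_neg at h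
    have h1 : (1:ℝ) ≤ ∑ _k : Fin K, lam := by
      rw [← hsum]; exact Finset.sum_le_sum (fun k _ => h k)
    rw [Finset.sum_const, Finset.card_univ, Fintype.card_fin, nsmul_eq_mul] at h1
    have : (K:ℝ) * lam < (K:ℝ) * (1/K) := mul_lt_mul_of_pos_left hlamK hKR
    rw [mul_one_div, div_self (ne_of_gt hKR)] at this
    linarith
  have hS : 0 < S := by
    obtain ⟨k0, hk0⟩ := hex
    have h1 : max (a k0 - lam) 0 ≤ S := Finset.single_le_sum (fun k _ => hcnn k) (Finset.mem_univ k0)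
    have h2 : (0:ℝ) < max (a k0 - lam) 0 := lt_max_of_lt_left (by linarith)
    linarith
  have hsplit : ∀ g : Fin K → ℝ, ∑ k ∈ P, g k + ∑ k ∈ Pc, g k = ∑ k, g k := by
    intro g
    exact Finset.sum_filter_add_sum_filter_not _ _ _
  have hSP : ∑ k ∈ P, max (a k - lam) 0 = S := by
    rw [hSdef, ← hsplit (fun k => max (a k - lam) 0)]
    have h0 : ∑ k ∈ Pc, max (a k - lam) 0 = 0 :=
      Finset.sum_eq_zero (fun k hk => max_eq_right (by linarith [hPcle k hk]))
    linarith
  have hppos : ∀ k ∈ P, 0 < p k := by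
    intro k hk
    have : (0:ℝ) < max (a k - lam) 0 := lt_max_of_lt_left (by linarith [hPlt k hk])
    exact div_pos this hS
  have hpsum : ∑ k ∈ P, p k = 1 := by
    rw [hp]
    simp only
    rw [← Finset.sum_div, hSP, div_self (ne_of_gt hS)]
  have hple : ∀ k, p k ≤ 1 := by
    intro k
    have : max (a k - lam) 0 ≤ S := Finset.single_le_sum (fun j _ => hcnn j) (Finset.mem_univ k)
    exact div_le_one_of_le₀ this (le_of_lt hS)
  have hpP : ∀ k ∈ P, p k = (a k - lam) / S := by
    intro k hk
    rw [hp]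
    simp only
    rw [max_eq_left (by linarith [hPlt k hk])]
  have hV0 : 0 ≤ V := by
    rw [hVdef]
    apply Finset.sum_nonneg
    intro k hk
    have hak : a k ≤ lam := hPcle k hk
    by_cases h : a k = lam
    · simp [h, Real.sqrt_nonneg]
    · simp only [h, if_false]
      exact mul_nonneg (le_of_lt hδ) (div_nonneg (ha k) (by linarith [lt_of_le_of_ne hak h]))
  have hV1 : V < 1 := hVlt
  have h1V : 0 < 1 - V := by linarith
  have hm1k : ∀ k, m k ≤ 1 := by
    intro k
    rw [← hm1]
    exact Finset.single_le_sum (fun j _ => hm0 j) (Finset.mem_univ k)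
  -- admissibility of w
  have hwnn : ∀ k, 0 ≤ w k := by
    intro k
    rw [hw]
    by_cases hk : lam < a k
    · simp only [hk, if_true]
      exact mul_nonneg (le_of_lt h1V) (le_of_lt (hppos k (hmemP k hk)))
    · simp only [hk, if_false]
      by_cases h : a k = lam
      · simp [h, Real.sqrt_nonneg]
      · simp only [h, if_false]
        exact mul_nonneg (le_of_lt hδ)
          (div_nonneg (ha k) (by linarith [lt_of_le_of_ne (le_of_not_gt hk) h]))
  have hwsum : ∑ k, w k = 1 := by
    rw [← hsplit w]
    have e1 : ∑ k ∈ P, w k = (1 - V) * ∑ k ∈ P, p k := by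
      rw [Finset.mul_sum]
      apply Finset.sum_congr rfl
      intro k hk
      rw [hw]
      simp only [hPlt k hk, if_true]
    have e2 : ∑ k ∈ Pc, w k = V := by
      rw [hVdef]
      apply Finset.sum_congr rfl
      intro k hk
      rw [hw]
      simp only [not_lt.2 (hPcle k hk), if_false]
    rw [e1, e2, hpsum]
    ring
  have hwpos : ∀ k, a k ≠ 0 → 0 < w k := by
    intro k hak
    rw [hw]
    by_cases hk : lam < a k
    · simp only [hk, if_true]
      exact mul_pos h1V (hppos k (hmemP k hk))
    · simp only [hk, if_false]
      by_cases h : a k = lam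
      · simp only [h, if_true]
        exact Real.sqrt_pos.2 hδ
      · simp only [h, if_false]
        have ha0 : 0 < a k := lt_of_le_of_ne (ha k) (Ne.symm hak)
        have hla : 0 < lam - a k := by linarith [lt_of_le_of_ne (le_of_not_gt hk) h]
        exact mul_pos hδ (div_pos ha0 hla)
  -- minimality
  have hFle : -(∑ k, a k * Real.log (m k)) + lam * ∑ k, Real.log (δ + m k) ≤
      -(∑ k, a k * Real.log (w k)) + lam * ∑ k, Real.log (δ + w k) :=
    isMinOn_iff.mp hmin w ⟨hwnn, hwsum, hwpos⟩
  -- rewrite objective as a single sum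
  have hobj : ∀ y : Fin K → ℝ, -(∑ k, a k * Real.log (y k)) + lam * ∑ k, Real.log (δ + y k)
      = ∑ k, (-(a k * Real.log (y k)) + lam * Real.log (δ + y k)) := by
    intro y
    rw [Finset.sum_add_distrib, Finset.sum_neg_distrib, Finset.mul_sum]
  -- lower bound for the objective at m
  have hlow : ∑ k ∈ P, (-((a k - lam) * Real.log (m k)))
      + ∑ k ∈ Pc, ((lam - a k) * Real.log δ +
        (lam * Real.log lam - a k * Real.log (a k) - (lam - a k) * Real.log (lam - a k)))
      ≤ ∑ k, (-(a k * Real.log (m k)) + lam * Real.log (δ + m k)) := by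
    rw [← hsplit (fun k => -(a k * Real.log (m k)) + lam * Real.log (δ + m k))]
    apply add_le_add
    · apply Finset.sum_le_sum
      intro k hk
      have hak : lam < a k := hPlt k hk
      have hmk : 0 < m k := hmpos k (by intro h0; rw [h0] at hak; linarith)
      have hlog : Real.log (m k) ≤ Real.log (δ + m k) :=
        Real.log_le_log hmk (by linarith)
      nlinarith [mul_le_mul_of_nonneg_left hlog (le_of_lt hlam)]
    · apply Finset.sum_le_sum
      intro k hk
      have hak : a k ≤ lam := hPcle k hk
      by_cases h0 : a k = 0
      · rw [h0]
        have hlog : Real.log δ ≤ Real.log (δ + m k) :=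
          Real.log_le_log hδ (by linarith [hm0 k])
        simp only [zero_mul, sub_zero, neg_zero, zero_add]
        nlinarith [mul_le_mul_of_nonneg_left hlog (le_of_lt hlam)]
      · have ha0 : 0 < a k := lt_of_le_of_ne (ha k) (Ne.symm h0)
        have hmk : 0 < m k := hmpos k h0
        by_cases heq : a k = lam
        · rw [heq]
          have hlog : Real.log (m k) ≤ Real.log (δ + m k) :=
            Real.log_le_log hmk (by linarith)
          have := mul_le_mul_of_nonneg_left hlog (le_of_lt hlam)
          simp only [sub_self, zero_mul]
          nlinarith
        · have hlt : a k < lam := lt_of_le_of_ne hak heq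
          exact lower_small (a k) lam δ (m k) ha0 hlt hδ hmk
  -- upper bound for the objective at w
  have hupP : ∀ k ∈ P, -(a k * Real.log (w k)) + lam * Real.log (δ + w k) ≤
      -((a k - lam) * Real.log (p k)) + (a k * (-Real.log (1 - V)) + lam * (δ / p k)) := by
    intro k hk
    have hak : lam < a k := hPlt k hk
    have hpk : 0 < p k := hppos k hk
    have hwk : w k = (1 - V) * p k := by rw [hw]; simp only [hak, if_true]
    have hwkpos : 0 < w k := by rw [hwk]; exact mul_pos h1V hpk
    have hlogw : Real.log (w k) = Real.log (1 - V) + Real.log (p k) := by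
      rw [hwk, Real.log_mul (ne_of_gt h1V) (ne_of_gt hpk)]
    have hA : Real.log (δ + w k) ≤ Real.log (δ + p k) := by
      apply Real.log_le_log (by linarith)
      rw [hwk]
      nlinarith [mul_nonneg hV0 hpk.le]
    have hB : Real.log (δ + p k) ≤ Real.log (p k) + δ / p k := by
      have h1 : Real.log (δ + p k) - Real.log (p k) = Real.log ((δ + p k) / p k) :=
        (Real.log_div (by linarith) (ne_of_gt hpk)).symm
      have h2 : Real.log ((δ + p k) / p k) ≤ (δ + p k) / p k - 1 :=
        Real.log_le_sub_one_of_pos (by positivity)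
      have h3 : (δ + p k) / p k - 1 = δ / p k := by field_simp; ring
      linarith
    rw [hlogw]
    have := mul_le_mul_of_nonneg_left (hA.trans hB) (le_of_lt hlam)
    nlinarith
  have hupPc : ∀ k ∈ Pc, -(a k * Real.log (w k)) + lam * Real.log (δ + w k) ≤
      (lam - a k) * Real.log δ +
        (lam * Real.log lam - a k * Real.log (a k) - (lam - a k) * Real.log (lam - a k))
      + (if a k = lam then lam * Real.sqrt δ else 0) := by
    intro k hk
    have hak : a k ≤ lam := hPcle k hk
    have hwk : w k = (if a k = lam then Real.sqrt δ else δ * (a k / (lam - a k))) := by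
      rw [hw]; simp only [not_lt.2 hak, if_false]
    by_cases heq : a k = lam
    · have hsd : 0 < Real.sqrt δ := Real.sqrt_pos.2 hδ
      have hwk2 : w k = Real.sqrt δ := by rw [hwk, if_pos heq]
      rw [hwk2, if_pos heq, heq]
      have hδeq : δ + Real.sqrt δ = Real.sqrt δ * (Real.sqrt δ + 1) := by
        rw [mul_add, Real.mul_self_sqrt (le_of_lt hδ)]; ring
      rw [hδeq, Real.log_mul (ne_of_gt hsd) (by positivity)]
      have hlog : Real.log (Real.sqrt δ + 1) ≤ Real.sqrt δ := by
        have := Real.log_le_sub_one_of_pos (show (0:ℝ) < Real.sqrt δ + 1 by positivity)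
        linarith
      have := mul_le_mul_of_nonneg_left hlog (le_of_lt hlam)
      nlinarith
    · have hlt : a k < lam := lt_of_le_of_ne hak heq
      simp only [heq, if_false] at hwk ⊢
      by_cases h0 : a k = 0
      · rw [hwk, h0]
        simp only [zero_div, mul_zero, zero_mul, neg_zero, zero_add, add_zero, sub_zero]
        have : Real.log lam - Real.log lam = 0 := by ring
        nlinarith [Real.log_le_sub_one_of_pos hlam]
      · have ha0 : 0 < a k := lt_of_le_of_ne (ha k) (Ne.symm h0)
        have hla : 0 < lam - a k := by linarith
        have hwkpos : 0 < δ * (a k / (lam - a k)) := by positivity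
        have hlogw : Real.log (δ * (a k / (lam - a k))) =
            Real.log δ + Real.log (a k) - Real.log (lam - a k) := by
          rw [Real.log_mul (ne_of_gt hδ) (ne_of_gt (by positivity)),
            Real.log_div (ne_of_gt ha0) (ne_of_gt hla)]
          ring
        have hsum2 : δ + δ * (a k / (lam - a k)) = δ * (lam / (lam - a k)) := by
          field_simp
          ring
        have hlogs : Real.log (δ + δ * (a k / (lam - a k))) =
            Real.log δ + Real.log lam - Real.log (lam - a k) := by
          rw [hsum2, Real.log_mul (ne_of_gt hδ) (ne_of_gt (by positivity)),
            Real.log_div (ne_of_gt hlam) (ne_of_gt hla)]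
          ring
        rw [hwk, hlogw, hlogs]
        ring_nf
        nlinarith [le_refl (0:ℝ)]
  -- assemble the upper bound
  have hup : ∑ k, (-(a k * Real.log (w k)) + lam * Real.log (δ + w k)) ≤
      (∑ k ∈ P, -((a k - lam) * Real.log (p k)))
      + (∑ k ∈ P, (a k * (-Real.log (1 - V)) + lam * (δ / p k)))
      + (∑ k ∈ Pc, ((lam - a k) * Real.log δ +
          (lam * Real.log lam - a k * Real.log (a k) - (lam - a k) * Real.log (lam - a k)))
        + ∑ k ∈ Pc, (if a k = lam then lam * Real.sqrt δ else 0)) := by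
    rw [← hsplit (fun k => -(a k * Real.log (w k)) + lam * Real.log (δ + w k))]
    apply add_le_add
    · calc ∑ k ∈ P, (-(a k * Real.log (w k)) + lam * Real.log (δ + w k))
          ≤ ∑ k ∈ P, (-((a k - lam) * Real.log (p k)) + (a k * (-Real.log (1 - V)) + lam * (δ / p k))) :=
            Finset.sum_le_sum hupP
        _ = _ := Finset.sum_add_distrib
    · calc ∑ k ∈ Pc, (-(a k * Real.log (w k)) + lam * Real.log (δ + w k))
          ≤ ∑ k ∈ Pc, (((lam - a k) * Real.log δ +
              (lam * Real.log lam - a k * Real.log (a k) - (lam - a k) * Real.log (lam - a k)))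
            + (if a k = lam then lam * Real.sqrt δ else 0)) := Finset.sum_le_sum hupPc
        _ = _ := Finset.sum_add_distrib
  -- bound the error terms
  have hlog1V : 0 ≤ -Real.log (1 - V) := by
    have : Real.log (1 - V) ≤ 0 := Real.log_nonpos (by linarith) (by linarith)
    linarith
  have herr1 : ∑ k ∈ P, (a k * (-Real.log (1 - V)) + lam * (δ / p k)) ≤
      -Real.log (1 - V) + lam * δ * T := by
    rw [Finset.sum_add_distrib]
    apply add_le_add
    · rw [← Finset.sum_mul]
      have hsa : ∑ k ∈ P, a k ≤ 1 := by
        rw [← hsum]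
        exact Finset.sum_le_sum_of_subset_of_nonneg (Finset.subset_univ P) (fun i _ _ => ha i)
      nlinarith
    · have he : ∀ k ∈ P, lam * (δ / p k) = lam * δ * (S / (a k - lam)) := by
        intro k hk
        rw [hpP k hk]
        have h1 : a k - lam ≠ 0 := ne_of_gt (by linarith [hPlt k hk])
        field_simp
      rw [Finset.sum_congr rfl he, ← Finset.mul_sum, hT]
  have herr2 : ∑ k ∈ Pc, (if a k = lam then lam * Real.sqrt δ else 0) ≤
      lam * Real.sqrt δ * K := by
    have h1 : ∀ k ∈ Pc, (if a k = lam then lam * Real.sqrt δ else 0) ≤ lam * Real.sqrt δ := by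
      intro k _
      split_ifs
      · exact le_refl _
      · positivity
    calc ∑ k ∈ Pc, (if a k = lam then lam * Real.sqrt δ else 0)
        ≤ ∑ _k ∈ Pc, lam * Real.sqrt δ := Finset.sum_le_sum h1
      _ = (Pc.card : ℝ) * (lam * Real.sqrt δ) := by
          rw [Finset.sum_const, nsmul_eq_mul]
      _ ≤ (K : ℝ) * (lam * Real.sqrt δ) := by
          apply mul_le_mul_of_nonneg_right _ (by positivity)
          have : Pc.card ≤ K := by
            calc Pc.card ≤ Finset.univ.card := Finset.card_filter_le _ _
              _ = K := by simp
          exact_mod_cast this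
      _ = lam * Real.sqrt δ * K := by ring
  -- key inequality on P
  have hid : ∑ k ∈ P, ((a k - lam) * (Real.log (p k) - Real.log (m k))) =
      ∑ k ∈ P, (-((a k - lam) * Real.log (m k))) - ∑ k ∈ P, (-((a k - lam) * Real.log (p k))) := by
    rw [← Finset.sum_sub_distrib]
    apply Finset.sum_congr rfl
    intro k _
    ring
  have hPhi : ∑ k ∈ P, ((a k - lam) * (Real.log (p k) - Real.log (m k))) ≤ E := by
    have h1 := hFle
    rw [hobj m, hobj w] at h1
    rw [hid, hE]
    linarith [hlow, hup, herr1, herr2, h1]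
  -- rewrite Phi with p
  have hPhi2 : S * ∑ k ∈ P, (p k * (Real.log (p k) - Real.log (m k))) ≤ E := by
    rw [Finset.mul_sum]
    have he : ∀ k ∈ P, S * (p k * (Real.log (p k) - Real.log (m k))) =
        (a k - lam) * (Real.log (p k) - Real.log (m k)) := by
      intro k hk
      rw [hpP k hk]
      field_simp
    rw [Finset.sum_congr rfl he]
    exact hPhi
  have hX : ∑ k ∈ P, (p k * (Real.log (p k) - Real.log (m k))) ≤ E / S := by
    rw [le_div_iff₀ hS]
    linarith [hPhi2]
  -- KL lower bound
  have hkl : ∀ k ∈ P, p k - m k + (m k - p k)^2/2 ≤ p k * (Real.log (p k) - Real.log (m k)) := by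
    intro k hk
    have hak : lam < a k := hPlt k hk
    have hmk : 0 < m k := hmpos k (by intro h0; rw [h0] at hak; linarith)
    exact kl_quad (p k) (m k) (hppos k hk) (hple k) hmk (hm1k k)
  have hsumineq : 1 - ∑ k ∈ P, m k + ∑ k ∈ P, ((m k - p k)^2/2) ≤ E / S := by
    have h1 : ∑ k ∈ P, (p k - m k + (m k - p k)^2/2) ≤ E / S :=
      le_trans (Finset.sum_le_sum hkl) hX
    have h2 : ∑ k ∈ P, (p k - m k + (m k - p k)^2/2) =
        1 - ∑ k ∈ P, m k + ∑ k ∈ P, ((m k - p k)^2/2) := by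
      rw [Finset.sum_add_distrib, Finset.sum_sub_distrib, hpsum]
    linarith
  have hPmle : ∑ k ∈ P, m k ≤ 1 := by
    rw [← hm1]
    exact Finset.sum_le_sum_of_subset_of_nonneg (Finset.subset_univ P) (fun i _ _ => hm0 i)
  have hE0 : 0 ≤ E := by
    rw [hE]
    have hT0 : 0 ≤ T := by
      rw [hT]
      apply Finset.sum_nonneg
      intro k hk
      exact div_nonneg (le_of_lt hS) (by linarith [hPlt k hk])
    have : 0 ≤ lam * δ * T := by positivity
    have : 0 ≤ lam * Real.sqrt δ * K := by positivity
    linarith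
  have hES : 0 ≤ E / S := div_nonneg hE0 (le_of_lt hS)
  -- conclusion
  intro k
  by_cases hk : lam < a k
  · have hkP : k ∈ P := hmemP k hk
    have hsq : (m k - p k)^2/2 ≤ ∑ j ∈ P, ((m j - p j)^2/2) :=
      Finset.single_le_sum (f := fun j => (m j - p j)^2/2) (fun j _ => by positivity) hkP
    have h1 : (m k - p k)^2 ≤ 2 * (E / S) := by linarith
    have habs : |m k - p k| ≤ Real.sqrt (2 * (E / S)) := by
      rw [← Real.sqrt_sq_eq_abs]
      exact Real.sqrt_le_sqrt h1
    have hpk : max (a k - lam) 0 / S = p k := by rw [hp]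
    rw [hpk]
    linarith
  · have hkPc : k ∈ Pc := hmemPc k hk
    have hmax0 : max (a k - lam) 0 = 0 := max_eq_right (by linarith [le_of_not_gt hk])
    rw [hmax0, zero_div, sub_zero, abs_of_nonneg (hm0 k)]
    have h1 : m k ≤ ∑ j ∈ Pc, m j := Finset.single_le_sum (fun j _ => hm0 j) hkPc
    have h2 : ∑ j ∈ P, m j + ∑ j ∈ Pc, m j = 1 := by rw [hsplit m, hm1]
    have h3 : 0 ≤ ∑ j ∈ P, ((m j - p j)^2/2) :=
      Finset.sum_nonneg (fun j _ => by positivity)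
    have h4 : m k ≤ E / S := by linarith
    linarith [Real.sqrt_nonneg (2 * (E / S))]


/-- For `δ > 0` let `z δ` be a minimizer of
`-∑ a_k log z_k + λ ∑ log (δ + z_k)` over the probability simplex
(restricted to points where `z_k > 0` whenever `a_k > 0`, since elsewhere the
objective is `+∞`).  Then as `δ → 0⁺`, `z δ` converges to the normalized
soft-thresholding point `z⁰_k = (a_k - λ)_+ / ∑_j (a_j - λ)_+`. -/
theorem log_penalty_soft_thresholding_limit
    (K : ℕ) (hK : 0 < K) (a : Fin K → ℝ) (ha : ∀ k, 0 ≤ a k)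
    (hsum : ∑ k, a k = 1) (lam : ℝ) (hlam : 0 < lam) (hlamK : lam < 1 / K)
    (z : ℝ → (Fin K → ℝ))
    (hz : ∀ δ : ℝ, 0 < δ →
      z δ ∈ {y : Fin K → ℝ | (∀ k, 0 ≤ y k) ∧ (∑ k, y k = 1) ∧
              ∀ k, a k ≠ 0 → 0 < y k} ∧
      IsMinOn
        (fun y : Fin K → ℝ =>
          -(∑ k, a k * Real.log (y k)) + lam * ∑ k, Real.log (δ + y k))
        {y : Fin K → ℝ | (∀ k, 0 ≤ y k) ∧ (∑ k, y k = 1) ∧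
          ∀ k, a k ≠ 0 → 0 < y k}
        (z δ)) :
    Tendsto z (nhdsWithin 0 (Set.Ioi 0))
      (nhds (fun k => max (a k - lam) 0 / ∑ j, max (a j - lam) 0)) := by
  classical
  set Vf : ℝ → ℝ := fun δ => ∑ k ∈ Finset.univ.filter (fun k => ¬ lam < a k),
      (if a k = lam then Real.sqrt δ else δ * (a k / (lam - a k))) with hVf
  set Ef : ℝ → ℝ := fun δ => -Real.log (1 - Vf δ) +
      lam * δ * (∑ k ∈ Finset.univ.filter (fun k => lam < a k),
        (∑ j, max (a j - lam) 0) / (a k - lam)) + lam * Real.sqrt δ * K with hEf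
  set Df : ℝ → ℝ := fun δ =>
      Real.sqrt (2 * (Ef δ / ∑ j, max (a j - lam) 0)) +
        Ef δ / ∑ j, max (a j - lam) 0 with hDf
  -- limits
  have hVt : Tendsto Vf (nhdsWithin 0 (Set.Ioi 0)) (nhds 0) := by
    rw [hVf]
    have h := tendsto_finset_sum (Finset.univ.filter (fun k => ¬ lam < a k))
      (f := fun (k : Fin K) (δ : ℝ) => if a k = lam then Real.sqrt δ else δ * (a k / (lam - a k)))
      (a := fun _ => (0:ℝ)) (x := nhdsWithin (0:ℝ) (Set.Ioi 0)) ?_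
    · simpa using h
    intro k _
    by_cases h : a k = lam
    · simp only [h, if_true]
      have : Tendsto Real.sqrt (nhds 0) (nhds 0) := by
        have := Real.continuous_sqrt.tendsto 0
        simpa using this
      exact this.mono_left nhdsWithin_le_nhds
    · simp only [h, if_false]
      have : Tendsto (fun δ : ℝ => δ * (a k / (lam - a k))) (nhds 0)
          (nhds (0 * (a k / (lam - a k)))) :=
        (continuous_id.mul continuous_const).tendsto 0
      rw [zero_mul] at this
      exact this.mono_left nhdsWithin_le_nhds
  have hEt : Tendsto Ef (nhdsWithin 0 (Set.Ioi 0)) (nhds 0) := by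
    rw [hEf]
    have h1 : Tendsto (fun δ : ℝ => -Real.log (1 - Vf δ)) (nhdsWithin 0 (Set.Ioi 0)) (nhds 0) := by
      have hc : Tendsto (fun δ : ℝ => 1 - Vf δ) (nhdsWithin 0 (Set.Ioi 0)) (nhds 1) := by
        have := (tendsto_const_nhds (x := (1:ℝ))
          (f := nhdsWithin (0:ℝ) (Set.Ioi 0))).sub hVt
        simpa using this
      have hl : Tendsto (fun δ : ℝ => Real.log (1 - Vf δ)) (nhdsWithin 0 (Set.Ioi 0))
          (nhds (Real.log 1)) := ((Real.continuousAt_log one_ne_zero).tendsto.comp hc)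
      rw [Real.log_one] at hl
      simpa using hl.neg
    have h2 : Tendsto (fun δ : ℝ => lam * δ * (∑ k ∈ Finset.univ.filter (fun k => lam < a k),
        (∑ j, max (a j - lam) 0) / (a k - lam))) (nhdsWithin 0 (Set.Ioi 0)) (nhds 0) := by
      have : Tendsto (fun δ : ℝ => lam * δ * (∑ k ∈ Finset.univ.filter (fun k => lam < a k),
          (∑ j, max (a j - lam) 0) / (a k - lam))) (nhds 0)
          (nhds (lam * 0 * (∑ k ∈ Finset.univ.filter (fun k => lam < a k),
          (∑ j, max (a j - lam) 0) / (a k - lam)))) := by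
        exact ((continuous_const.mul continuous_id).mul continuous_const).tendsto 0
      rw [mul_zero, zero_mul] at this
      exact this.mono_left nhdsWithin_le_nhds
    have h3 : Tendsto (fun δ : ℝ => lam * Real.sqrt δ * K) (nhdsWithin 0 (Set.Ioi 0)) (nhds 0) := by
      have : Tendsto (fun δ : ℝ => lam * Real.sqrt δ * K) (nhds 0)
          (nhds (lam * Real.sqrt 0 * K)) :=
        ((continuous_const.mul Real.continuous_sqrt).mul continuous_const).tendsto 0
      rw [Real.sqrt_zero, mul_zero, zero_mul] at this
      exact this.mono_left nhdsWithin_le_nhds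
    have := (h1.add h2).add h3
    simpa using this
  have hDt : Tendsto Df (nhdsWithin 0 (Set.Ioi 0)) (nhds 0) := by
    rw [hDf]
    have h1 : Tendsto (fun δ : ℝ => Ef δ / ∑ j, max (a j - lam) 0)
        (nhdsWithin 0 (Set.Ioi 0)) (nhds 0) := by
      have := hEt.div_const (∑ j, max (a j - lam) 0)
      simpa using this
    have h2 : Tendsto (fun δ : ℝ => Real.sqrt (2 * (Ef δ / ∑ j, max (a j - lam) 0)))
        (nhdsWithin 0 (Set.Ioi 0)) (nhds 0) := by
      have hc : Tendsto (fun δ : ℝ => 2 * (Ef δ / ∑ j, max (a j - lam) 0))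
          (nhdsWithin 0 (Set.Ioi 0)) (nhds 0) := by
        have := h1.const_mul (2:ℝ)
        simpa using this
      have := (Real.continuous_sqrt.tendsto 0).comp hc
      simpa only [Function.comp_def, Real.sqrt_zero] using this
    have := h2.add h1
    simpa using this
  -- eventual bound
  have hev1 : ∀ᶠ δ in nhdsWithin (0:ℝ) (Set.Ioi 0), Vf δ < 1 := by
    have : Set.Iio (1:ℝ) ∈ nhds (0:ℝ) := Iio_mem_nhds (by norm_num)
    exact hVt this
  have hev2 : ∀ᶠ δ in nhdsWithin (0:ℝ) (Set.Ioi 0), δ ∈ Set.Ioi (0:ℝ) :=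
    eventually_mem_nhdsWithin
  have hbound : ∀ᶠ δ in nhdsWithin (0:ℝ) (Set.Ioi 0), ∀ k,
      |z δ k - max (a k - lam) 0 / ∑ j, max (a j - lam) 0| ≤ Df δ := by
    filter_upwards [hev1, hev2] with δ h1 h2
    have hδ : 0 < δ := h2
    have := est K hK a ha hsum lam hlam hlamK δ hδ h1 (z δ) (hz δ hδ).1 (hz δ hδ).2
    intro k
    exact this k
  -- conclude componentwise
  rw [tendsto_pi_nhds]
  intro k
  rw [← tendsto_sub_nhds_zero_iff]
  apply squeeze_zero_norm' _ hDt
  filter_upwards [hbound] with δ h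
  simpa [Real.norm_eq_abs] using h k
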